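/- Let H be a real Hilbert space and P a non-empty self-dual cone in H (i.e., P equals its dual cone {ψ : ⟨ψ,φ⟩ ≥ 0 for all φ ∈ P}). Then every φ ∈ H admits a unique decomposition φ = φ₊ − φ₋ with φ₊, φ₋ ∈ P and ⟨φ₊, φ₋⟩ = 0. Moreover φ₊ is the metric projection of φ onto P and φ₋ is the metric projection of −φ onto P. -/

import Mathlib

private lemma moreau_aux {H : Type*} [NormedAddCommGroup H] [InnerProductSpace ℝ H]
    (P : Set H)
    (hP : ∀ ψ ∈ P, ∀ χ ∈ P, 0 ≤ (inner ℝ ψ χ : ℝ)) (φ : H)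
    (a b : H) (ha : a ∈ P) (hb : b ∈ P) (hab : φ = a - b)
    (horth : (inner ℝ a b : ℝ) = 0) :
    ∀ ψ ∈ P, ‖φ - a‖ ≤ ‖φ - ψ‖ := by
  intro ψ hψ
  have h1 : (0:ℝ) ≤ inner ℝ ψ b := hP ψ hψ b hb
  have e1 : ‖φ - a‖ = ‖b‖ := by
    have : φ - a = -b := by rw [hab]; abel
    rw [this, norm_neg]
  have e2 : ‖φ - ψ‖^2 = ‖a - ψ‖^2 + 2 * (inner ℝ ψ b : ℝ) + ‖b‖^2 := by
    have h : φ - ψ = (a - ψ) + (-b) := by rw [hab]; abel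
    rw [h, norm_add_sq_real]
    have h2 : (inner ℝ (a - ψ) (-b) : ℝ) = inner ℝ ψ b := by
      rw [inner_neg_right, inner_sub_left, horth]; ring
    rw [h2, norm_neg]
  have h2 : ‖φ - a‖^2 ≤ ‖φ - ψ‖^2 := by
    rw [e1, e2]; nlinarith [sq_nonneg ‖a - ψ‖]
  nlinarith [norm_nonneg (φ - a), norm_nonneg (φ - ψ)]

/-- Moreau decomposition with respect to a non-empty self-dual cone `P` in a real Hilbert
space: every `φ` admits a unique decomposition `φ = φ₊ − φ₋` with `φ₊, φ₋ ∈ P` and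
`⟨φ₊, φ₋⟩ = 0`; moreover `φ₊` is the metric projection of `φ` onto `P` and `φ₋` is the
metric projection of `−φ` onto `P`. -/
theorem stmt_0 {H : Type*} [NormedAddCommGroup H] [InnerProductSpace ℝ H] [CompleteSpace H]
    (P : Set H) (hne : P.Nonempty) (hconv : Convex ℝ P)
    (hcone : ∀ (c : ℝ), 0 < c → ∀ x ∈ P, c • x ∈ P)
    (hsd : P = {ψ : H | ∀ φ ∈ P, 0 ≤ (inner ℝ ψ φ : ℝ)}) (φ : H) :
    (∃! p : H × H, p.1 ∈ P ∧ p.2 ∈ P ∧ φ = p.1 - p.2 ∧ (inner ℝ p.1 p.2 : ℝ) = 0) ∧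
    (∀ φp φm : H, φp ∈ P → φm ∈ P → φ = φp - φm → (inner ℝ φp φm : ℝ) = 0 →
      (∀ ψ ∈ P, ‖φ - φp‖ ≤ ‖φ - ψ‖) ∧ (∀ ψ ∈ P, ‖(-φ) - φm‖ ≤ ‖(-φ) - ψ‖)) := by
  have hP : ∀ ψ ∈ P, ∀ χ ∈ P, 0 ≤ (inner ℝ ψ χ : ℝ) := by
    intro ψ hψ χ hχ
    rw [hsd] at hψ
    exact hψ χ hχ
  -- P is closed
  have hclosed : IsClosed P := by
    have hc2 : IsClosed {ψ : H | ∀ χ ∈ P, 0 ≤ (inner ℝ ψ χ : ℝ)} := by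
      have h : {ψ : H | ∀ χ ∈ P, 0 ≤ (inner ℝ ψ χ : ℝ)}
          = ⋂ χ ∈ P, {ψ : H | 0 ≤ (inner ℝ ψ χ : ℝ)} := by
        ext ψ; simp
      rw [h]
      exact isClosed_biInter fun χ _ =>
        isClosed_le continuous_const (Continuous.inner continuous_id continuous_const)
    rw [hsd]; exact hc2
  -- existence of nearest point
  obtain ⟨v, hvP, hv⟩ := exists_norm_eq_iInf_of_complete_convex hne
    (hclosed.isComplete) hconv φ
  have hvar : ∀ w ∈ P, (inner ℝ (φ - v) (w - v) : ℝ) ≤ 0 :=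
    (norm_eq_iInf_iff_real_inner_le_zero hconv hvP).mp hv
  -- ⟪φ - v, v⟫ = 0
  have hzero : (inner ℝ (φ - v) v : ℝ) = 0 := by
    have h2 := hvar ((2:ℝ) • v) (hcone 2 two_pos v hvP)
    have hh : ((2:ℝ) • v) - v = v := by rw [two_smul]; abel
    rw [hh] at h2
    have h3 := hvar ((1/2 : ℝ) • v) (hcone (1/2) (by norm_num) v hvP)
    have hh2 : ((1/2:ℝ) • v) - v = (-(1/2):ℝ) • v := by
      have hs := sub_smul (1/2 : ℝ) 1 v
      rw [one_smul] at hs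
      rw [← hs]; norm_num
    rw [hh2, real_inner_smul_right] at h3
    linarith
  -- hence ⟪φ - v, w⟫ ≤ 0 for all w ∈ P
  have hneg : ∀ w ∈ P, (inner ℝ (φ - v) w : ℝ) ≤ 0 := by
    intro w hw
    have := hvar w hw
    rw [inner_sub_right, hzero] at this
    linarith
  obtain ⟨b, hbdef⟩ : ∃ b : H, b = v - φ := ⟨_, rfl⟩
  have hbP : b ∈ P := by
    rw [hsd]
    intro χ hχ
    have h := hneg χ hχ
    have e : (inner ℝ b χ : ℝ) = -(inner ℝ (φ - v) χ : ℝ) := by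
      rw [hbdef, ← neg_sub φ v, inner_neg_left]
    rw [e]; linarith
  have hvb : (inner ℝ v b : ℝ) = 0 := by
    rw [hbdef, real_inner_comm, ← neg_sub φ v, inner_neg_left, hzero, neg_zero]
  have hdecomp : φ = v - b := by rw [hbdef]; abel
  constructor
  · refine ⟨(v, b), ⟨hvP, hbP, hdecomp, hvb⟩, ?_⟩
    rintro ⟨a', b'⟩ ⟨ha', hb', hd', ho'⟩
    simp only at ha' hb' hd' ho' ⊢
    have h0 : a' - b' = v - b := by rw [← hd', hdecomp]
    have key : a' - v = b' - b := sub_eq_sub_iff_sub_eq_sub.mp h0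
    have h1 : (0:ℝ) ≤ inner ℝ a' b := hP a' ha' b hbP
    have h2 : (0:ℝ) ≤ inner ℝ v b' := hP v hvP b' hb'
    have hsq : ‖a' - v‖^2 ≤ 0 := by
      have e : ‖a' - v‖^2 = (inner ℝ (a' - v) (b' - b) : ℝ) := by
        rw [← key, ← real_inner_self_eq_norm_sq]
      rw [e, inner_sub_left, inner_sub_right, inner_sub_right, ho', hvb]
      linarith
    have ha : a' = v := by
      have hnn := norm_nonneg (a' - v)
      have hn : ‖a' - v‖ = 0 := by nlinarith
      exact sub_eq_zero.mp (norm_eq_zero.mp hn)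
    have hb2 : b' = b := by
      have : b' - b = 0 := by rw [← key, ha, sub_self]
      exact sub_eq_zero.mp this
    simp [ha, hb2]
  · intro φp φm hφp hφm hd ho
    refine ⟨moreau_aux P hP φ φp φm hφp hφm hd ho, ?_⟩
    refine moreau_aux P hP (-φ) φm φp hφm hφp ?_ ?_
    · rw [hd]; abel
    · rw [real_inner_comm]; exact ho
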